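/- Let Π be a Lévy measure with Π((0,∞)) = ∞, set v(δ)² = δ^{−2} ∫₀^∞ (x∧δ)² Π(dx) and μ(δ) = δ^{−1} ∫₀^∞ (x∧δ) Π(dx). If for every λ ≥ 0, ∫₀^∞ (x∧δ)³/(δ³ v(δ)³) Π(dx) → 0 as δ → 0, then for every λ ≥ 0, λμ(δ)/v(δ) − Φ̃^δ(λ/(δ v(δ))) → λ²/2 as δ → 0, where Φ̃^δ(u) = ∫₀^∞ (1 − e^{−u(x∧δ)}) Π(dx). -/

import Mathlib

open MeasureTheory Set Filter

lemma exp_neg_le_quad {y : ℝ} (hy : 0 ≤ y) : Real.exp (-y) ≤ 1 - y + y ^ 2 / 2 := by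
  have h1 : 1 + y + y ^ 2 / 2 ≤ Real.exp y := Real.quadratic_le_exp_of_nonneg hy
  have h2 : Real.exp (-y) * Real.exp y = 1 := by
    rw [← Real.exp_add]; simp
  have h3 := Real.exp_pos (-y)
  nlinarith [sq_nonneg (y * y), sq_nonneg y]

lemma cubic_le_exp_neg {y : ℝ} (hy : 0 ≤ y) :
    1 - y + y ^ 2 / 2 - y ^ 3 / 6 ≤ Real.exp (-y) := by
  set f : ℝ → ℝ := fun t => Real.exp (-t) - (1 - t + t ^ 2 / 2 - t ^ 3 / 6) with hf
  have hd : ∀ t : ℝ, HasDerivAt f (-Real.exp (-t) - (-1 + t - t ^ 2 / 2)) t := by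
    intro t
    have h1 : HasDerivAt (fun t : ℝ => Real.exp (-t)) (-Real.exp (-t)) t := by
      have := (hasDerivAt_neg t).exp; convert this using 1; ring
    have h2 : HasDerivAt (fun t : ℝ => 1 - t + t ^ 2 / 2 - t ^ 3 / 6)
        (-1 + t - t ^ 2 / 2) t := by
      have : HasDerivAt (fun t : ℝ => 1 - t + t ^ 2 / 2 - t ^ 3 / 6)
          (0 - 1 + 2 * t ^ 1 / 2 - 3 * t ^ 2 / 6) t := by
        exact (((hasDerivAt_const t (1:ℝ)).sub (hasDerivAt_id t)).add
          ((hasDerivAt_pow 2 t).div_const 2)).sub ((hasDerivAt_pow 3 t).div_const 6)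
      convert this using 1; ring
    exact h1.sub h2
  have hmono : MonotoneOn f (Ici (0 : ℝ)) := by
    apply monotoneOn_of_deriv_nonneg (convex_Ici 0)
    · exact Continuous.continuousOn (by fun_prop)
    · intro t ht
      exact ((hd t).differentiableAt).differentiableWithinAt
    · intro t ht
      rw [interior_Ici] at ht
      rw [(hd t).deriv]
      have h := exp_neg_le_quad (le_of_lt ht)
      linarith
  have h0 : f 0 = 0 := by simp [hf]
  have := hmono (self_mem_Ici) (mem_Ici.2 hy) hy
  rw [h0] at this
  simpa [hf] using this

theorem laplace_transform_clt_limit (ν : Measure ℝ)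
    (hsupp : ν (Iic (0 : ℝ)) = 0)
    (hinf : ν (Ioi (0 : ℝ)) = ⊤)
    (hlevy : ∫⁻ x in Ioi (0 : ℝ), ENNReal.ofReal (min x 1) ∂ν ≠ ⊤)
    (v μ : ℝ → ℝ)
    (hv : ∀ δ : ℝ, 0 < δ →
      v δ = δ⁻¹ * Real.sqrt (∫ x in Ioi (0 : ℝ), (min x δ) ^ 2 ∂ν))
    (hμ : ∀ δ : ℝ, 0 < δ → μ δ = δ⁻¹ * ∫ x in Ioi (0 : ℝ), min x δ ∂ν)
    (hlyap : Tendsto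
      (fun δ : ℝ => (∫ x in Ioi (0 : ℝ), (min x δ) ^ 3 ∂ν) / (δ ^ 3 * (v δ) ^ 3))
      (nhdsWithin 0 (Ioi 0)) (nhds 0)) :
    ∀ lam : ℝ, 0 ≤ lam →
      Tendsto (fun δ : ℝ =>
          lam * μ δ / v δ -
            ∫ x in Ioi (0 : ℝ), (1 - Real.exp (-(lam / (δ * v δ) * min x δ))) ∂ν)
        (nhdsWithin 0 (Ioi 0)) (nhds (lam ^ 2 / 2)) := by
  intro lam hlam
  have key : ∀ δ : ℝ, 0 < δ →
      lam ^ 2 / 2 - lam ^ 3 / 6 *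
          ((∫ x in Ioi (0:ℝ), (min x δ) ^ 3 ∂ν) / (δ ^ 3 * (v δ) ^ 3)) ≤
        lam * μ δ / v δ -
          (∫ x in Ioi (0:ℝ), (1 - Real.exp (-(lam / (δ * v δ) * min x δ))) ∂ν) ∧
      lam * μ δ / v δ -
          (∫ x in Ioi (0:ℝ), (1 - Real.exp (-(lam / (δ * v δ) * min x δ))) ∂ν) ≤
        lam ^ 2 / 2 := by
    intro δ hδ
    have hδ0 : δ ≠ 0 := hδ.ne'
    set S1 := ∫ x in Ioi (0:ℝ), min x δ ∂ν with hS1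
    set S2 := ∫ x in Ioi (0:ℝ), (min x δ) ^ 2 ∂ν with hS2d
    set S3 := ∫ x in Ioi (0:ℝ), (min x δ) ^ 3 ∂ν with hS3
    have hmeas : Measurable fun x : ℝ => min x δ := measurable_id.min measurable_const
    have hnn : ∀ᵐ x ∂ν.restrict (Ioi 0), 0 ≤ min x δ :=
      (ae_restrict_iff' measurableSet_Ioi).2 (ae_of_all _ fun x hx => le_min (le_of_lt hx) hδ.le)
    have hlin : ∫⁻ x in Ioi (0:ℝ), ENNReal.ofReal (min x δ) ∂ν < ⊤ := by
      have hb : ∀ x ∈ Ioi (0:ℝ), ENNReal.ofReal (min x δ) ≤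
          ENNReal.ofReal (max δ 1) * ENNReal.ofReal (min x 1) := by
        intro x hx
        rw [← ENNReal.ofReal_mul (le_max_of_le_right zero_le_one)]
        apply ENNReal.ofReal_le_ofReal
        rcases le_total x 1 with h | h
        · calc min x δ ≤ x := min_le_left _ _
            _ = 1 * x := (one_mul x).symm
            _ ≤ max δ 1 * min x 1 := by
                rw [min_eq_left h]
                exact mul_le_mul_of_nonneg_right (le_max_right _ _) (le_of_lt hx)
        · calc min x δ ≤ δ := min_le_right _ _
            _ ≤ max δ 1 * 1 := by rw [mul_one]; exact le_max_left _ _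
            _ = max δ 1 * min x 1 := by rw [min_eq_right h]
      calc ∫⁻ x in Ioi (0:ℝ), ENNReal.ofReal (min x δ) ∂ν
          ≤ ∫⁻ x in Ioi (0:ℝ), ENNReal.ofReal (max δ 1) * ENNReal.ofReal (min x 1) ∂ν :=
            setLIntegral_mono
              (measurable_const.mul ((measurable_id.min measurable_const).ennreal_ofReal)) hb
        _ = ENNReal.ofReal (max δ 1) * ∫⁻ x in Ioi (0:ℝ), ENNReal.ofReal (min x 1) ∂ν :=
            lintegral_const_mul _ ((measurable_id.min measurable_const).ennreal_ofReal)
        _ < ⊤ := ENNReal.mul_lt_top ENNReal.ofReal_lt_top (lt_top_iff_ne_top.2 hlevy)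
    have hI1 : Integrable (fun x => min x δ) (ν.restrict (Ioi 0)) :=
      ⟨hmeas.aestronglyMeasurable, (hasFiniteIntegral_iff_ofReal hnn).2 hlin⟩
    have hI2 : Integrable (fun x => (min x δ) ^ 2) (ν.restrict (Ioi 0)) := by
      apply (hI1.const_mul δ).mono ((hmeas.pow_const 2).aestronglyMeasurable)
      filter_upwards [hnn] with x hx
      rw [Real.norm_eq_abs, Real.norm_eq_abs, abs_of_nonneg (pow_nonneg hx 2),
        abs_of_nonneg (mul_nonneg hδ.le hx)]
      nlinarith [min_le_right x δ]
    have hI3 : Integrable (fun x => (min x δ) ^ 3) (ν.restrict (Ioi 0)) := by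
      apply (hI1.const_mul (δ ^ 2)).mono ((hmeas.pow_const 3).aestronglyMeasurable)
      filter_upwards [hnn] with x hx
      rw [Real.norm_eq_abs, Real.norm_eq_abs, abs_of_nonneg (pow_nonneg hx 3),
        abs_of_nonneg (mul_nonneg (sq_nonneg δ) hx)]
      calc (min x δ) ^ 3 = (min x δ) ^ 2 * min x δ := by ring
        _ ≤ δ ^ 2 * min x δ :=
            mul_le_mul_of_nonneg_right (pow_le_pow_left₀ hx (min_le_right x δ) 2) hx
    have hnn2 : ∀ᵐ x ∂ν.restrict (Ioi 0), 0 ≤ (min x δ) ^ 2 :=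
      ae_of_all _ fun x => sq_nonneg _
    have hS2pos : 0 < S2 := by
      rw [hS2d, setIntegral_pos_iff_support_of_nonneg_ae hnn2 hI2]
      have hsub : Ioi (0:ℝ) ⊆ Function.support (fun x => (min x δ) ^ 2) ∩ Ioi 0 := by
        intro x hx
        refine ⟨?_, hx⟩
        simp only [Function.mem_support]
        exact pow_ne_zero _ (ne_of_gt (lt_min hx hδ))
      calc (0 : ENNReal) < ⊤ := by simp
        _ = ν (Ioi 0) := hinf.symm
        _ ≤ ν (Function.support (fun x => (min x δ) ^ 2) ∩ Ioi 0) := measure_mono hsub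
    have hvδ : v δ = δ⁻¹ * Real.sqrt S2 := hv δ hδ
    have hA : δ * v δ = Real.sqrt S2 := by rw [hvδ]; field_simp
    have hApos : 0 < δ * v δ := by rw [hA]; exact Real.sqrt_pos.2 hS2pos
    have hvpos : 0 < v δ := by
      rcases mul_pos_iff.mp hApos with ⟨_, h⟩ | ⟨h, _⟩
      · exact h
      · linarith
    have hA2 : (δ * v δ) ^ 2 = S2 := by rw [hA, Real.sq_sqrt hS2pos.le]
    set u := lam / (δ * v δ) with hu
    have hun : 0 ≤ u := div_nonneg hlam hApos.le
    have hynn : ∀ᵐ x ∂ν.restrict (Ioi 0), 0 ≤ u * min x δ := by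
      filter_upwards [hnn] with x hx; exact mul_nonneg hun hx
    have hIe : Integrable (fun x => 1 - Real.exp (-(u * min x δ))) (ν.restrict (Ioi 0)) := by
      apply (hI1.const_mul u).mono
      · exact Continuous.aestronglyMeasurable (by fun_prop)
      · filter_upwards [hynn] with x hx
        have h1 : Real.exp (-(u * min x δ)) ≤ 1 := by
          rw [← Real.exp_zero]
          exact Real.exp_le_exp.2 (by linarith)
        have h2 : 1 - u * min x δ ≤ Real.exp (-(u * min x δ)) := by
          have := Real.add_one_le_exp (-(u * min x δ)); linarith
        rw [Real.norm_eq_abs, Real.norm_eq_abs, abs_of_nonneg (by linarith),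
          abs_of_nonneg hx]
        linarith
    have hIg : Integrable (fun x => u * min x δ - (1 - Real.exp (-(u * min x δ))))
        (ν.restrict (Ioi 0)) := (hI1.const_mul u).sub hIe
    have hFrw : lam * μ δ / v δ -
        (∫ x in Ioi (0:ℝ), (1 - Real.exp (-(u * min x δ))) ∂ν)
        = ∫ x in Ioi (0:ℝ), (u * min x δ - (1 - Real.exp (-(u * min x δ)))) ∂ν := by
      rw [integral_sub (hI1.const_mul u) hIe, integral_const_mul, hμ δ hδ, ← hS1, hu]
      field_simp
    have hu2 : u ^ 2 * S2 = lam ^ 2 := by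
      rw [hu, div_pow, hA2]
      field_simp
    have hu3 : u ^ 3 = lam ^ 3 / (δ ^ 3 * (v δ) ^ 3) := by
      rw [hu, div_pow, mul_pow]
    have hub : ∀ᵐ x ∂ν.restrict (Ioi 0),
        u * min x δ - (1 - Real.exp (-(u * min x δ))) ≤ u ^ 2 / 2 * (min x δ) ^ 2 := by
      filter_upwards [hynn] with x hx
      have h := exp_neg_le_quad hx
      have h2 : (u * min x δ) ^ 2 = u ^ 2 * (min x δ) ^ 2 := mul_pow _ _ _
      nlinarith
    have hlb : ∀ᵐ x ∂ν.restrict (Ioi 0),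
        u ^ 2 / 2 * (min x δ) ^ 2 - u ^ 3 / 6 * (min x δ) ^ 3 ≤
          u * min x δ - (1 - Real.exp (-(u * min x δ))) := by
      filter_upwards [hynn] with x hx
      have h := cubic_le_exp_neg hx
      have h2 : (u * min x δ) ^ 2 = u ^ 2 * (min x δ) ^ 2 := mul_pow _ _ _
      have h3 : (u * min x δ) ^ 3 = u ^ 3 * (min x δ) ^ 3 := mul_pow _ _ _
      nlinarith
    have hub' := integral_mono_ae hIg (hI2.const_mul (u ^ 2 / 2)) hub
    have hlb' := integral_mono_ae
      ((hI2.const_mul (u ^ 2 / 2)).sub (hI3.const_mul (u ^ 3 / 6))) hIg hlb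
    have e1 : ∫ x in Ioi (0:ℝ), u ^ 2 / 2 * (min x δ) ^ 2 ∂ν = lam ^ 2 / 2 := by
      rw [integral_const_mul, ← hS2d]
      linarith [hu2]
    have e2 : ∫ x in Ioi (0:ℝ),
        (u ^ 2 / 2 * (min x δ) ^ 2 - u ^ 3 / 6 * (min x δ) ^ 3) ∂ν
        = lam ^ 2 / 2 - lam ^ 3 / 6 * (S3 / (δ ^ 3 * (v δ) ^ 3)) := by
      rw [integral_sub (hI2.const_mul (u ^ 2 / 2)) (hI3.const_mul (u ^ 3 / 6)),
        integral_const_mul, integral_const_mul, ← hS2d, ← hS3, hu3]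
      linear_combination hu2 / 2
    constructor
    · rw [hFrw]
      calc lam ^ 2 / 2 - lam ^ 3 / 6 * (S3 / (δ ^ 3 * (v δ) ^ 3))
          = ∫ x in Ioi (0:ℝ),
              (u ^ 2 / 2 * (min x δ) ^ 2 - u ^ 3 / 6 * (min x δ) ^ 3) ∂ν := e2.symm
        _ ≤ _ := hlb'
    · rw [hFrw]
      calc (∫ x in Ioi (0:ℝ), (u * min x δ - (1 - Real.exp (-(u * min x δ)))) ∂ν)
          ≤ ∫ x in Ioi (0:ℝ), u ^ 2 / 2 * (min x δ) ^ 2 ∂ν := hub'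
        _ = lam ^ 2 / 2 := e1
  refine tendsto_of_tendsto_of_tendsto_of_le_of_le'
    (g := fun δ : ℝ => lam ^ 2 / 2 - lam ^ 3 / 6 *
      ((∫ x in Ioi (0:ℝ), (min x δ) ^ 3 ∂ν) / (δ ^ 3 * (v δ) ^ 3)))
    (h := fun _ : ℝ => lam ^ 2 / 2) ?_ tendsto_const_nhds ?_ ?_
  · have h0 : Tendsto (fun δ : ℝ => lam ^ 2 / 2 - lam ^ 3 / 6 *
        ((∫ x in Ioi (0:ℝ), (min x δ) ^ 3 ∂ν) / (δ ^ 3 * (v δ) ^ 3)))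
        (nhdsWithin 0 (Ioi 0)) (nhds (lam ^ 2 / 2 - lam ^ 3 / 6 * 0)) :=
      Tendsto.sub tendsto_const_nhds (hlyap.const_mul _)
    simpa using h0
  · filter_upwards [self_mem_nhdsWithin] with δ hδ
    exact (key δ hδ).1
  · filter_upwards [self_mem_nhdsWithin] with δ hδ
    exact (key δ hδ).2
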